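/- Let m, n be positive integers, A ∈ ℝ^{m×n}, b ∈ ℝ^m, and let L be a natural number with 0 < L < m. Suppose A satisfies the 1-Absolute Range Property of order L for some ψ ∈ (0,1), and suppose x* ∈ ℝ^n satisfies ‖|Ax*| − b‖₀ ≤ L. Then: (i) ‖|Ax| − b‖₁ ≥ ‖|Ax*| − b‖₁ for all x ∈ ℝ^n, i.e., x* is a global minimizer of f₁(x) := ‖|Ax| − b‖₁; (ii) for every x ∈ ℝ^n, ‖|Ax| − |Ax*|‖₁ ≤ (2(1+ψ)/(1−ψ)) · σ¹_L(x); (iii) if x̃ is any other global minimizer of f₁, then |Ax̃| = |Ax*| componentwise. -/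

import Mathlib

open Finset

/-- `sigmaL L v` : the minimum over subsets `T` of cardinality `L` of the sum of `|v i|`
over the complement of `T`, i.e. the sum of all but the `L` largest entries of `|v|`. -/
noncomputable def sigmaL {m : ℕ} (L : ℕ) (v : Fin m → ℝ) : ℝ :=
  ⨅ T : {T : Finset (Fin m) // T.card = L}, ∑ i ∈ (T : Finset (Fin m))ᶜ, |v i|

private lemma tri_aux {v w b : ℝ} : |w - b| ≤ |v - b| + |v - w| := by
  have h := abs_add_le (v - b) (w - v)
  rw [show v - b + (w - v) = w - b by ring, abs_sub_comm w v] at h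
  exact h

/-- Part (i), abstract form. -/
private lemma lem1 {m : ℕ} {ψ : ℝ} (hψ1 : ψ ≤ 1)
    (v w b : Fin m → ℝ) (S : Finset (Fin m))
    (hSb : ∀ i ∉ S, w i = b i)
    (hd : ∑ i ∈ S, |v i - w i| ≤ ψ * ∑ i ∈ Sᶜ, |v i - w i|) :
    ∑ i, |w i - b i| ≤ ∑ i, |v i - b i| := by
  have h1 : ∑ i ∈ S, |v i - b i| + ∑ i ∈ Sᶜ, |v i - b i| = ∑ i, |v i - b i| :=
    Finset.sum_add_sum_compl S _
  have h2 : ∑ i ∈ S, |w i - b i| + ∑ i ∈ Sᶜ, |w i - b i| = ∑ i, |w i - b i| :=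
    Finset.sum_add_sum_compl S _
  have h2' : ∑ i ∈ Sᶜ, |w i - b i| = 0 :=
    Finset.sum_eq_zero fun i hi => by rw [hSb i (Finset.mem_compl.mp hi)]; simp
  have h3 : ∑ i ∈ Sᶜ, |v i - b i| = ∑ i ∈ Sᶜ, |v i - w i| :=
    Finset.sum_congr rfl fun i hi => by rw [hSb i (Finset.mem_compl.mp hi)]
  have h4 : ∑ i ∈ S, |w i - b i| ≤ ∑ i ∈ S, (|v i - b i| + |v i - w i|) :=
    Finset.sum_le_sum fun i _ => tri_aux
  rw [Finset.sum_add_distrib] at h4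
  have hnn : 0 ≤ ∑ i ∈ Sᶜ, |v i - w i| :=
    Finset.sum_nonneg fun i _ => abs_nonneg _
  have hψR : ψ * ∑ i ∈ Sᶜ, |v i - w i| ≤ 1 * ∑ i ∈ Sᶜ, |v i - w i| :=
    mul_le_mul_of_nonneg_right hψ1 hnn
  rw [one_mul] at hψR
  linarith

/-- Part (iii), abstract form. -/
private lemma lem3 {m : ℕ} {ψ : ℝ} (hψ0 : 0 ≤ ψ) (hψ1 : ψ < 1)
    (v w b : Fin m → ℝ) (S : Finset (Fin m))
    (hSb : ∀ i ∉ S, w i = b i)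
    (hd : ∑ i ∈ S, |v i - w i| ≤ ψ * ∑ i ∈ Sᶜ, |v i - w i|)
    (hmin : ∑ i, |v i - b i| ≤ ∑ i, |w i - b i|) :
    ∀ i, v i = w i := by
  have h1 : ∑ i ∈ S, |v i - b i| + ∑ i ∈ Sᶜ, |v i - b i| = ∑ i, |v i - b i| :=
    Finset.sum_add_sum_compl S _
  have h2 : ∑ i ∈ S, |w i - b i| + ∑ i ∈ Sᶜ, |w i - b i| = ∑ i, |w i - b i| :=
    Finset.sum_add_sum_compl S _
  have h2' : ∑ i ∈ Sᶜ, |w i - b i| = 0 :=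
    Finset.sum_eq_zero fun i hi => by rw [hSb i (Finset.mem_compl.mp hi)]; simp
  have h3 : ∑ i ∈ Sᶜ, |v i - b i| = ∑ i ∈ Sᶜ, |v i - w i| :=
    Finset.sum_congr rfl fun i hi => by rw [hSb i (Finset.mem_compl.mp hi)]
  have h4 : ∑ i ∈ S, |w i - b i| ≤ ∑ i ∈ S, (|v i - b i| + |v i - w i|) :=
    Finset.sum_le_sum fun i _ => tri_aux
  rw [Finset.sum_add_distrib] at h4
  have hnn : 0 ≤ ∑ i ∈ Sᶜ, |v i - w i| :=
    Finset.sum_nonneg fun i _ => abs_nonneg _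
  -- ∑_{Sᶜ}|v-w| ≤ ∑_S|v-w| ≤ ψ ∑_{Sᶜ}|v-w|, hence both are 0
  have hR : ∑ i ∈ Sᶜ, |v i - w i| ≤ ψ * ∑ i ∈ Sᶜ, |v i - w i| := by linarith
  have hR0 : ∑ i ∈ Sᶜ, |v i - w i| = 0 := by nlinarith
  have hS0 : ∑ i ∈ S, |v i - w i| = 0 := by
    have hnnS : 0 ≤ ∑ i ∈ S, |v i - w i| :=
      Finset.sum_nonneg fun i _ => abs_nonneg _
    rw [hR0] at hd; linarith
  have htot : ∑ i, |v i - w i| = 0 := by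
    rw [← Finset.sum_add_sum_compl S, hR0, hS0, add_zero]
  intro i
  have := (Finset.sum_eq_zero_iff_of_nonneg (fun i _ => abs_nonneg (v i - w i))).mp htot
    i (Finset.mem_univ i)
  have := abs_eq_zero.mp this
  linarith

/-- Part (ii), abstract form: for each `T` of cardinality `L`. -/
private lemma lem2 {m : ℕ} {L : ℕ} {ψ : ℝ} (hψ0 : 0 ≤ ψ) (hψ1 : ψ < 1)
    (v w b : Fin m → ℝ) (S : Finset (Fin m)) (hScard : S.card ≤ L)
    (hSb : ∀ i ∉ S, w i = b i)
    (harp : ∀ T : Finset (Fin m), T.card ≤ L →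
      ∑ i ∈ T, |v i - w i| ≤ ψ * ∑ i ∈ Tᶜ, |v i - w i|)
    (T : Finset (Fin m)) (hT : T.card = L) :
    (1 - ψ) * ∑ i, |v i - w i| ≤ (1 + ψ) * ∑ i ∈ Tᶜ, |v i - b i| := by
  classical
  set U : Finset (Fin m) := Sᶜ.filter (· ∈ T) with hUdef
  have hUcard : U.card ≤ L := by
    rw [← hT]
    exact Finset.card_le_card fun i hi => (Finset.mem_filter.mp hi).2
  have hA := harp S hScard
  have hB := harp U hUcard
  have hCS : ∑ i ∈ S, |v i - w i| + ∑ i ∈ Sᶜ, |v i - w i| = ∑ i, |v i - w i| :=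
    Finset.sum_add_sum_compl S _
  have hCU : ∑ i ∈ U, |v i - w i| + ∑ i ∈ Uᶜ, |v i - w i| = ∑ i, |v i - w i| :=
    Finset.sum_add_sum_compl U _
  have hsplit : ∑ i ∈ Sᶜ.filter (· ∈ T), |v i - w i|
      + ∑ i ∈ Sᶜ.filter (¬ · ∈ T), |v i - w i| = ∑ i ∈ Sᶜ, |v i - w i| :=
    Finset.sum_filter_add_sum_filter_not Sᶜ _ _
  have hq : ∑ i ∈ Sᶜ.filter (¬ · ∈ T), |v i - w i| ≤ ∑ i ∈ Tᶜ, |v i - b i| := by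
    have heq : ∑ i ∈ Sᶜ.filter (¬ · ∈ T), |v i - w i|
        = ∑ i ∈ Sᶜ.filter (¬ · ∈ T), |v i - b i| :=
      Finset.sum_congr rfl fun i hi => by
        rw [hSb i (Finset.mem_compl.mp (Finset.mem_filter.mp hi).1)]
    rw [heq]
    refine Finset.sum_le_sum_of_subset_of_nonneg ?_ fun i _ _ => abs_nonneg _
    intro i hi
    exact Finset.mem_compl.mpr (Finset.mem_filter.mp hi).2
  have hσnn : 0 ≤ ∑ i ∈ Tᶜ, |v i - b i| :=
    Finset.sum_nonneg fun i _ => abs_nonneg _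
  have hqnn : 0 ≤ ∑ i ∈ Sᶜ.filter (¬ · ∈ T), |v i - w i| :=
    Finset.sum_nonneg fun i _ => abs_nonneg _
  have hkey : (1 - ψ) * ∑ i, |v i - w i|
      ≤ (1 + ψ) * ∑ i ∈ Sᶜ.filter (¬ · ∈ T), |v i - w i| := by
    have hU' : ∑ i ∈ U, |v i - w i| = ∑ i ∈ Sᶜ.filter (· ∈ T), |v i - w i| := rfl
    nlinarith [hA, hB, hCS, hCU, hsplit]
  have : (1 + ψ) * ∑ i ∈ Sᶜ.filter (¬ · ∈ T), |v i - w i|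
      ≤ (1 + ψ) * ∑ i ∈ Tᶜ, |v i - b i| :=
    mul_le_mul_of_nonneg_left hq (by linarith)
  linarith

theorem stmt_3 (m n : ℕ) (hm : 0 < m) (hn : 0 < n)
    (A : Fin m → Fin n → ℝ) (b : Fin m → ℝ)
    (L : ℕ) (hL0 : 0 < L) (hLm : L < m)
    (ψ : ℝ) (hψ0 : 0 < ψ) (hψ1 : ψ < 1)
    (hARP : ∀ (x y : Fin n → ℝ) (T : Finset (Fin m)), T.card ≤ L →
      ∑ i ∈ T, |abs (∑ j, A i j * x j) - abs (∑ j, A i j * y j)| ≤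
        ψ * ∑ i ∈ Tᶜ, |abs (∑ j, A i j * x j) - abs (∑ j, A i j * y j)|)
    (xs : Fin n → ℝ)
    (hsparse : (univ.filter fun i => abs (∑ j, A i j * xs j) - b i ≠ 0).card ≤ L) :
    (∀ x : Fin n → ℝ,
        ∑ i, |abs (∑ j, A i j * x j) - b i| ≥ ∑ i, |abs (∑ j, A i j * xs j) - b i|) ∧
    (∀ x : Fin n → ℝ,
        ∑ i, |abs (∑ j, A i j * x j) - abs (∑ j, A i j * xs j)| ≤
          (2 * (1 + ψ) / (1 - ψ)) * sigmaL L (fun i => abs (∑ j, A i j * x j) - b i)) ∧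
    (∀ xt : Fin n → ℝ,
        (∀ x : Fin n → ℝ,
          ∑ i, |abs (∑ j, A i j * xt j) - b i| ≤ ∑ i, |abs (∑ j, A i j * x j) - b i|) →
        ∀ i, |∑ j, A i j * xt j| = |∑ j, A i j * xs j|) := by
  classical
  set u : (Fin n → ℝ) → Fin m → ℝ := fun x i => abs (∑ j, A i j * x j) with hudef
  set S : Finset (Fin m) := univ.filter fun i => u xs i - b i ≠ 0 with hSdef
  have hScard : S.card ≤ L := hsparse
  have hSb : ∀ i ∉ S, u xs i = b i := by
    intro i hi
    have h : ¬(u xs i - b i ≠ 0) :=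
      fun h => hi (Finset.mem_filter.mpr ⟨Finset.mem_univ i, h⟩)
    push_neg at h
    linarith
  have harp : ∀ (x : Fin n → ℝ) (T : Finset (Fin m)), T.card ≤ L →
      ∑ i ∈ T, abs (u x i - u xs i) ≤ ψ * ∑ i ∈ Tᶜ, abs (u x i - u xs i) :=
    fun x T hT => hARP x xs T hT
  refine ⟨?_, ?_, ?_⟩
  · -- part (i)
    intro x
    exact lem1 hψ1.le (u x) (u xs) b S hSb (harp x S hScard)
  · -- part (ii)
    intro x
    haveI hne : Nonempty {T : Finset (Fin m) // T.card = L} := by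
      obtain ⟨T, -, hT⟩ := Finset.exists_subset_card_eq (s := (univ : Finset (Fin m))) (n := L)
        (by rw [Finset.card_univ, Fintype.card_fin]; exact hLm.le)
      exact ⟨⟨T, hT⟩⟩
    have hc : (0 : ℝ) < 2 * (1 + ψ) / (1 - ψ) := div_pos (by linarith) (by linarith)
    have hkey : ∀ T : {T : Finset (Fin m) // T.card = L},
        (∑ i, abs (u x i - u xs i)) / (2 * (1 + ψ) / (1 - ψ)) ≤
          ∑ i ∈ (T : Finset (Fin m))ᶜ, abs (u x i - b i) := by
      rintro ⟨T, hT⟩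
      have h2 := lem2 hψ0.le hψ1 (u x) (u xs) b S hScard hSb (harp x) T hT
      have hσnn : 0 ≤ ∑ i ∈ Tᶜ, abs (u x i - b i) :=
        Finset.sum_nonneg fun i _ => abs_nonneg _
      rw [div_le_iff₀ hc]
      have hne' : (1:ℝ) - ψ ≠ 0 := by linarith
      have h3 : (1 - ψ) * ∑ i, abs (u x i - u xs i)
          ≤ (1 - ψ) * ((∑ i ∈ Tᶜ, abs (u x i - b i)) * (2 * (1 + ψ) / (1 - ψ))) := by
        have heq : (1 - ψ) * ((∑ i ∈ Tᶜ, abs (u x i - b i)) * (2 * (1 + ψ) / (1 - ψ)))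
            = (∑ i ∈ Tᶜ, abs (u x i - b i)) * (2 * (1 + ψ)) := by
          field_simp
        rw [heq]
        nlinarith [mul_nonneg (by linarith : (0:ℝ) ≤ 1 + ψ) hσnn]
      exact le_of_mul_le_mul_left h3 (by linarith)
    have hinf : (∑ i, abs (u x i - u xs i)) / (2 * (1 + ψ) / (1 - ψ)) ≤
        sigmaL L (fun i => u x i - b i) := by
      simp only [sigmaL]
      exact le_ciInf hkey
    calc ∑ i, abs (u x i - u xs i)
        ≤ sigmaL L (fun i => u x i - b i) * (2 * (1 + ψ) / (1 - ψ)) :=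
          (div_le_iff₀ hc).mp hinf
      _ = (2 * (1 + ψ) / (1 - ψ)) * sigmaL L (fun i => u x i - b i) := mul_comm _ _
  · -- part (iii)
    intro xt hmin i
    exact lem3 hψ0.le hψ1 (u xt) (u xs) b S hSb (harp xt S hScard) (hmin xs) i
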